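/- arXiv:2507.21543 — 2 statements merged into one kernel-verified Lean document; each statement's English description precedes it below -/
import Mathlib

section
/- If in addition each A_k (k = 0,…,T−1) is invertible, then for every k ∈ {0,…,T} the matrix Π_k defined by the backward Riccati recursion is symmetric positive definite. -/
open Matrix Filter Topology

/-- The unique symmetric positive semidefinite square root of a positive
semidefinite real matrix (junk value `0` if the matrix is not PSD). -/
noncomputable def msqrt {d : ℕ} (X : Matrix (Fin d) (Fin d) ℝ) :
    Matrix (Fin d) (Fin d) ℝ :=
  letI := Classical.propDecidable X.PosSemidef
  if h : X.PosSemidef then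
    (h.1.eigenvectorUnitary : Matrix (Fin d) (Fin d) ℝ) *
      diagonal ((↑) ∘ (√·) ∘ h.1.eigenvalues) *
      (star h.1.eigenvectorUnitary : Matrix (Fin d) (Fin d) ℝ)
  else 0

/-- The Frobenius norm of a real square matrix. -/
noncomputable def frob {d : ℕ} (X : Matrix (Fin d) (Fin d) ℝ) : ℝ :=
  Real.sqrt (∑ i, ∑ j, X i j ^ 2)

/-- Data of the mutual information optimal control problem for a discrete-time
linear system `x_{k+1} = A_k x_k + B_k u_k + w_k`. -/
structure LQData (n m : ℕ) where
  ε : ℝ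
  A : ℕ → Matrix (Fin n) (Fin n) ℝ
  B : ℕ → Matrix (Fin n) (Fin m) ℝ
  R : ℕ → Matrix (Fin m) (Fin m) ℝ
  F : Matrix (Fin n) (Fin n) ℝ
  Sw : ℕ → Matrix (Fin n) (Fin n) ℝ
  Sini : Matrix (Fin n) (Fin n) ℝ

namespace LQData

variable {n m : ℕ} (P : LQData n m) (T : ℕ) (Srho : ℕ → Matrix (Fin m) (Fin m) ℝ)

/-- The backward Riccati recursion `Π_k` associated with the prior covariances
`Σ_{ρ_k}`: `Π_T = F` and
`Π_k = A_kᵀ Π_{k+1} A_k − (1/ε) A_kᵀ Π_{k+1} B_k Σ^{1/2} (I + Σ^{1/2} C_k Σ^{1/2})⁻¹ Σ^{1/2} B_kᵀ Π_{k+1} A_k`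
with `C_k = (R_k + B_kᵀ Π_{k+1} B_k)/ε`. -/
noncomputable def Ric (k : ℕ) : Matrix (Fin n) (Fin n) ℝ :=
  if h : T ≤ k then P.F
  else
    let Pk := Ric (k + 1)
    let S := msqrt (Srho k)
    let C := (1 / P.ε) • (P.R k + (P.B k)ᵀ * Pk * P.B k)
    (P.A k)ᵀ * Pk * P.A k -
      (1 / P.ε) • ((P.A k)ᵀ * Pk * P.B k * S * (1 + S * C * S)⁻¹ * S * (P.B k)ᵀ * Pk * P.A k)
termination_by T - k
decreasing_by omega

/-- `C_k = (R_k + B_kᵀ Π_{k+1} B_k)/ε`. -/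
noncomputable def Ck (k : ℕ) : Matrix (Fin m) (Fin m) ℝ :=
  (1 / P.ε) • (P.R k + (P.B k)ᵀ * P.Ric T Srho (k + 1) * P.B k)

/-- `Σ_{Q_k} = ε (R_k + B_kᵀ Π_{k+1} B_k)⁻¹`. -/
noncomputable def SigQ (k : ℕ) : Matrix (Fin m) (Fin m) ℝ :=
  P.ε • (P.R k + (P.B k)ᵀ * P.Ric T Srho (k + 1) * P.B k)⁻¹

/-- Covariance `Σ_{π_k}` of the optimal policy for the fixed prior. -/
noncomputable def SigPi (k : ℕ) : Matrix (Fin m) (Fin m) ℝ :=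
  msqrt (Srho k) * (1 + msqrt (Srho k) * P.Ck T Srho k * msqrt (Srho k))⁻¹ * msqrt (Srho k)

/-- Feedback gain `P_k = −(1/ε) Σ_{π_k} B_kᵀ Π_{k+1} A_k`. -/
noncomputable def Pgain (k : ℕ) : Matrix (Fin m) (Fin n) ℝ :=
  -((1 / P.ε) • (P.SigPi T Srho k * (P.B k)ᵀ * P.Ric T Srho (k + 1) * P.A k))

/-- Forward state covariance recursion under the optimal policy. -/
noncomputable def Sigx : ℕ → Matrix (Fin n) (Fin n) ℝ
  | 0 => P.Sini
  | k + 1 =>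
    (P.A k + P.B k * P.Pgain T Srho k) * Sigx k *
        (P.A k + P.B k * P.Pgain T Srho k)ᵀ +
      P.B k * P.SigPi T Srho k * (P.B k)ᵀ + P.Sw k

/-- The standard LQR Riccati recursion `Π̌_k`. -/
noncomputable def RicLQR (k : ℕ) : Matrix (Fin n) (Fin n) ℝ :=
  if h : T ≤ k then P.F
  else
    let Pk := RicLQR (k + 1)
    (P.A k)ᵀ * Pk * P.A k -
      (P.A k)ᵀ * Pk * P.B k * (P.R k + (P.B k)ᵀ * Pk * P.B k)⁻¹ * (P.B k)ᵀ * Pk * P.A k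
termination_by T - k
decreasing_by omega

/-- `Π̂_k = A_kᵀ ⋯ A_{T−1}ᵀ F A_{T−1} ⋯ A_k`. -/
noncomputable def RicHat (k : ℕ) : Matrix (Fin n) (Fin n) ℝ :=
  if h : T ≤ k then P.F
  else (P.A k)ᵀ * RicHat (k + 1) * P.A k
termination_by T - k
decreasing_by omega

/-- `Σ_{w_{k−1}}` with the convention `Σ_{w_{−1}} := Σ_{x_ini}`. -/
noncomputable def Swm1 (k : ℕ) : Matrix (Fin n) (Fin n) ℝ :=
  if k = 0 then P.Sini else P.Sw (k - 1)

/-- The matrix `M̌_k` from the sufficient condition for stochastic optimal policies. -/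
noncomputable def Mcheck (k : ℕ) : Matrix (Fin m) (Fin m) ℝ :=
  (P.R k + (P.B k)ᵀ * P.RicHat T (k + 1) * P.B k)⁻¹ *
      ((P.B k)ᵀ * P.RicLQR T (k + 1) * P.A k * P.Swm1 k * (P.A k)ᵀ *
        P.RicLQR T (k + 1) * P.B k) *
      (P.R k + (P.B k)ᵀ * P.RicHat T (k + 1) * P.B k)⁻¹ -
    P.ε • (P.R k + (P.B k)ᵀ * P.RicLQR T (k + 1) * P.B k)⁻¹

/-- State covariance under the zero control input. -/
noncomputable def SigxZero : ℕ → Matrix (Fin n) (Fin n) ℝ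
  | 0 => P.Sini
  | k + 1 => P.A k * SigxZero k * (P.A k)ᵀ + P.Sw k

/-- The matrix `M̂_k^zero` from the sufficient condition for deterministic optimal policies. -/
noncomputable def MhatZero (k : ℕ) : Matrix (Fin m) (Fin m) ℝ :=
  (P.R k + (P.B k)ᵀ * P.RicLQR T (k + 1) * P.B k)⁻¹ *
      ((P.B k)ᵀ * P.RicHat T (k + 1) * P.A k * P.SigxZero k * (P.A k)ᵀ *
        P.RicHat T (k + 1) * P.B k) *
      (P.R k + (P.B k)ᵀ * P.RicLQR T (k + 1) * P.B k)⁻¹ -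
    P.ε • (P.R k + (P.B k)ᵀ * P.RicHat T (k + 1) * P.B k)⁻¹


/-- The backward recursion `r_k` for the mean offset:
`r_T = 0` and `r_k = A_k⁻¹ r_{k+1} − Π_k⁻¹ A_kᵀ Π_{k+1} B_k (I + Σ_{ρ_k} C_k)⁻¹ μ_{ρ_k}`. -/
noncomputable def rvec (μ : ℕ → Fin m → ℝ) (k : ℕ) : Fin n → ℝ :=
  if h : T ≤ k then 0
  else
    ((P.A k)⁻¹).mulVec (rvec μ (k + 1)) -
      ((P.Ric T Srho k)⁻¹ * ((P.A k)ᵀ * P.Ric T Srho (k + 1) * P.B k *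
        (1 + Srho k * P.Ck T Srho k)⁻¹)).mulVec (μ k)
termination_by T - k
decreasing_by omega

/-- `Θ_k = ε C_k − ε C_k Σ_{π_k} C_k − (I − C_k Σ_{π_k}) B_kᵀ Π_{k+1} A_k Π_k⁻¹ A_kᵀ Π_{k+1} B_k (I − Σ_{π_k} C_k)`. -/
noncomputable def Theta (k : ℕ) : Matrix (Fin m) (Fin m) ℝ :=
  P.ε • P.Ck T Srho k - P.ε • (P.Ck T Srho k * P.SigPi T Srho k * P.Ck T Srho k) -
    (1 - P.Ck T Srho k * P.SigPi T Srho k) *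
      ((P.B k)ᵀ * P.Ric T Srho (k + 1) * P.A k * (P.Ric T Srho k)⁻¹ *
        ((P.A k)ᵀ * P.Ric T Srho (k + 1) * P.B k)) *
      (1 - P.SigPi T Srho k * P.Ck T Srho k)

end LQData

/-- Extend a `T`-tuple of matrices to a function on `ℕ` (by zero). -/
def extT {m : ℕ} (T : ℕ) (σ : Fin T → Matrix (Fin m) (Fin m) ℝ) :
    ℕ → Matrix (Fin m) (Fin m) ℝ :=
  fun k => if h : k < T then σ ⟨k, h⟩ else 0


/-- Extend a `T`-tuple of vectors to a function on `ℕ` (by zero). -/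
def extV {m : ℕ} (T : ℕ) (μ : Fin T → Fin m → ℝ) : ℕ → Fin m → ℝ :=
  fun k => if h : k < T then μ ⟨k, h⟩ else 0

namespace LQData

variable {n m : ℕ} (P : LQData n m) (T : ℕ)

/-- The reduced objective `J̌` as a function of the `T`-tuple of prior covariances. -/
noncomputable def Jcheck (σ : Fin T → Matrix (Fin m) (Fin m) ℝ) : ℝ :=
  (1 / 2) * ((P.Ric T (extT T σ) 0 * P.Sini).trace +
    ∑ k : Fin T,
      (P.ε * Real.log ((extT T σ k + P.SigQ T (extT T σ) k).det / (P.SigQ T (extT T σ) k).det) +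
        (P.Ric T (extT T σ) (k + 1) * P.Sw k).trace))

/-- `L_k = (Σ_{Q_k} + Σ_{ρ_k})⁻¹`. -/
noncomputable def Lmat (Srho : ℕ → Matrix (Fin m) (Fin m) ℝ) (k : ℕ) :
    Matrix (Fin m) (Fin m) ℝ :=
  (P.SigQ T Srho k + Srho k)⁻¹

/-- `E_k = (1/ε) Σ_{Q_k} B_kᵀ Π_{k+1} A_k`. -/
noncomputable def Emat (Srho : ℕ → Matrix (Fin m) (Fin m) ℝ) (k : ℕ) :
    Matrix (Fin m) (Fin n) ℝ :=
  (1 / P.ε) • (P.SigQ T Srho k * (P.B k)ᵀ * P.Ric T Srho (k + 1) * P.A k)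

/-- `J̌'_k = (ε/2) L_k (Σ_{ρ_k} + Σ_{Q_k} − E_k Σ_{x_k} E_kᵀ) L_k`. -/
noncomputable def Jprime (Srho : ℕ → Matrix (Fin m) (Fin m) ℝ) (k : ℕ) :
    Matrix (Fin m) (Fin m) ℝ :=
  (P.ε / 2) • (P.Lmat T Srho k *
    (Srho k + P.SigQ T Srho k - P.Emat T Srho k * P.Sigx T Srho k * (P.Emat T Srho k)ᵀ) *
    P.Lmat T Srho k)

/-- The alternating-optimization update map `𝒯` on `T`-tuples of prior covariances:
`𝒯(σ)_k = Σ_{π_k} + P_k Σ_{x_k} P_kᵀ`. -/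
noncomputable def Tmap (σ : Fin T → Matrix (Fin m) (Fin m) ℝ) :
    Fin T → Matrix (Fin m) (Fin m) ℝ :=
  fun k =>
    P.SigPi T (extT T σ) k +
      P.Pgain T (extT T σ) k * P.Sigx T (extT T σ) k * (P.Pgain T (extT T σ) k)ᵀ

/-- The objective `J` as a function of the prior means, for fixed prior covariances:
`J(μ) = (1/2)( r_0ᵀ Π_0 r_0 + Σ_k μ_{ρ_k}ᵀ Θ_k μ_{ρ_k} )`. -/
noncomputable def Jmean (Srho : ℕ → Matrix (Fin m) (Fin m) ℝ) (μ : Fin T → Fin m → ℝ) : ℝ :=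
  (1 / 2) *
    (P.rvec T Srho (extV T μ) 0 ⬝ᵥ (P.Ric T Srho 0).mulVec (P.rvec T Srho (extV T μ) 0) +
      ∑ k : Fin T, μ k ⬝ᵥ (P.Theta T Srho k).mulVec (μ k))

end LQData

open Matrix Filter Topology LQData


section helpers
variable {p q : ℕ}

lemma herm_smul (c : ℝ) {M : Matrix (Fin p) (Fin p) ℝ} (hM : M.IsHermitian) :
    (c • M).IsHermitian := by
  unfold Matrix.IsHermitian at *
  rw [conjTranspose_smul, hM]
  simp

lemma pd_smul {c : ℝ} (hc : 0 < c) {M : Matrix (Fin p) (Fin p) ℝ} (hM : M.PosDef) :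
    (c • M).PosDef := by
  refine Matrix.PosDef.of_dotProduct_mulVec_pos (herm_smul c hM.1) (fun x hx => ?_)
  have := hM.dotProduct_mulVec_pos hx
  simp only [smul_mulVec, dotProduct_smul, smul_eq_mul]
  positivity

lemma psd_smul {c : ℝ} (hc : 0 ≤ c) {M : Matrix (Fin p) (Fin p) ℝ} (hM : M.PosSemidef) :
    (c • M).PosSemidef := by
  refine Matrix.PosSemidef.of_dotProduct_mulVec_nonneg (herm_smul c hM.1) (fun x => ?_)
  have := hM.dotProduct_mulVec_nonneg x
  simp only [smul_mulVec, dotProduct_smul, smul_eq_mul]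
  positivity

lemma pd_conj {M A : Matrix (Fin p) (Fin p) ℝ} (hM : M.PosDef) (hA : IsUnit A) :
    (Aᵀ * M * A).PosDef := by
  have hAt : Aᵀ = Aᴴ := (conjTranspose_eq_transpose_of_trivial A).symm
  rw [hAt]
  refine Matrix.PosDef.of_dotProduct_mulVec_pos (isHermitian_conjTranspose_mul_mul A hM.1)
    (fun x hx => ?_)
  have hinj := mulVec_injective_iff_isUnit.mpr hA
  have hx' : A *ᵥ x ≠ 0 := fun h => hx (hinj (by rw [h, mulVec_zero]))
  simpa only [star_mulVec, dotProduct_mulVec, vecMul_vecMul] using hM.dotProduct_mulVec_pos hx'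

lemma psd_mul_mul_transpose {M : Matrix (Fin q) (Fin q) ℝ} (hM : M.PosSemidef)
    (B : Matrix (Fin p) (Fin q) ℝ) : (B * M * Bᵀ).PosSemidef := by
  have := hM.mul_mul_conjTranspose_same B
  rwa [conjTranspose_eq_transpose_of_trivial] at this

lemma pd_one_add_self_mul (W : Matrix (Fin p) (Fin q) ℝ) :
    ((1 : Matrix (Fin p) (Fin p) ℝ) + W * Wᵀ).PosDef := by
  have h : (W * Wᵀ).PosSemidef := by
    have := Matrix.posSemidef_self_mul_conjTranspose W
    rwa [conjTranspose_eq_transpose_of_trivial] at this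
  exact Matrix.PosDef.add_posSemidef Matrix.PosDef.one h

lemma pd_one_add_mul_self (W : Matrix (Fin p) (Fin q) ℝ) :
    ((1 : Matrix (Fin q) (Fin q) ℝ) + Wᵀ * W).PosDef := by
  simpa using pd_one_add_self_mul Wᵀ

lemma push_through (W : Matrix (Fin p) (Fin q) ℝ) :
    W * (1 + Wᵀ * W)⁻¹ = (1 + W * Wᵀ)⁻¹ * W := by
  letI := (pd_one_add_self_mul W).isUnit.invertible
  letI := (pd_one_add_mul_self W).isUnit.invertible
  have e : (1 + W * Wᵀ) * W = W * (1 + Wᵀ * W) := by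
    rw [Matrix.add_mul, Matrix.mul_add, Matrix.one_mul, Matrix.mul_one, Matrix.mul_assoc]
  calc W * (1 + Wᵀ * W)⁻¹
      = (1 + W * Wᵀ)⁻¹ * ((1 + W * Wᵀ) * W * (1 + Wᵀ * W)⁻¹) := by
        rw [← Matrix.mul_assoc, ← Matrix.mul_assoc, Matrix.inv_mul_of_invertible, Matrix.one_mul]
    _ = (1 + W * Wᵀ)⁻¹ * W := by
        rw [e, Matrix.mul_assoc, Matrix.mul_inv_of_invertible, Matrix.mul_one]

lemma one_sub_eq (W : Matrix (Fin p) (Fin q) ℝ) :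
    (1 : Matrix (Fin p) (Fin p) ℝ) - W * (1 + Wᵀ * W)⁻¹ * Wᵀ = (1 + W * Wᵀ)⁻¹ := by
  letI := (pd_one_add_self_mul W).isUnit.invertible
  rw [push_through, Matrix.mul_assoc]
  have h1 : (1 : Matrix (Fin p) (Fin p) ℝ) = (1 + W * Wᵀ)⁻¹ * (1 + W * Wᵀ) :=
    (Matrix.inv_mul_of_invertible _).symm
  nth_rewrite 1 [h1]
  rw [← Matrix.mul_sub, add_sub_cancel_right, Matrix.mul_one]

lemma pd_one_sub (W : Matrix (Fin p) (Fin q) ℝ) :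
    ((1 : Matrix (Fin p) (Fin p) ℝ) - W * (1 + Wᵀ * W)⁻¹ * Wᵀ).PosDef := by
  rw [one_sub_eq]; exact (pd_one_add_self_mul W).inv

open scoped MatrixOrder in
lemma msqrt_formula_eq {A : Matrix (Fin p) (Fin p) ℝ} (h : A.PosSemidef) :
    (h.1.eigenvectorUnitary : Matrix (Fin p) (Fin p) ℝ) *
      diagonal ((↑) ∘ (√·) ∘ h.1.eigenvalues) *
      (star h.1.eigenvectorUnitary : Matrix (Fin p) (Fin p) ℝ) = CFC.sqrt A := by
  rw [CFC.sqrt_eq_real_sqrt A h.nonneg, cfcₙ_eq_cfc, h.1.cfc_eq]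
  simp only [IsHermitian.cfc, Unitary.conjStarAlgAut_apply]
  rfl

open scoped MatrixOrder in
lemma msqrt_eq_sqrt {A : Matrix (Fin p) (Fin p) ℝ} (h : A.PosSemidef) :
    msqrt A = CFC.sqrt A := by
  unfold msqrt
  rw [dif_pos h, msqrt_formula_eq h]

open scoped MatrixOrder in
lemma msqrt_psd_of {A : Matrix (Fin p) (Fin p) ℝ} (h : A.PosSemidef) : (msqrt A).PosSemidef := by
  rw [msqrt_eq_sqrt h]; exact (CFC.sqrt_nonneg A).posSemidef

open scoped MatrixOrder in
lemma msqrt_mul_self {A : Matrix (Fin p) (Fin p) ℝ} (h : A.PosSemidef) :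
    msqrt A * msqrt A = A := by
  rw [msqrt_eq_sqrt h]; exact CFC.sqrt_mul_sqrt_self A h.nonneg

lemma sqrt_posDef {A : Matrix (Fin p) (Fin p) ℝ} (hA : A.PosDef) :
    (msqrt A).PosDef := by
  set S := msqrt A with hS
  have hSpsd := msqrt_psd_of hA.posSemidef
  have hSS : S * S = A := msqrt_mul_self hA.posSemidef
  have hU : IsUnit S := by
    rw [Matrix.isUnit_iff_isUnit_det]
    have : IsUnit (S.det * S.det) := by
      rw [← Matrix.det_mul, hSS]; exact hA.det_pos.ne'.isUnit
    exact isUnit_of_mul_isUnit_left this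
  refine Matrix.PosDef.of_dotProduct_mulVec_pos hSpsd.1 (fun x hx => ?_)
  rcases lt_or_eq_of_le (hSpsd.dotProduct_mulVec_nonneg x) with h | h
  · exact h
  · exfalso
    have h0 : S *ᵥ x = 0 := (hSpsd.dotProduct_mulVec_zero_iff x).mp h.symm
    exact hx ((mulVec_injective_iff_isUnit.mpr hU) (by rw [h0, mulVec_zero]))

lemma psd_symm {A : Matrix (Fin p) (Fin p) ℝ} (hA : A.PosSemidef) : Aᵀ = A := by
  have := hA.1
  rwa [Matrix.IsHermitian, conjTranspose_eq_transpose_of_trivial] at this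

/-- `1 - V (H + Vᵀ V)⁻¹ Vᵀ` is positive definite for `H ≻ 0`. -/
lemma pd_one_sub_gen {H : Matrix (Fin q) (Fin q) ℝ} (hH : H.PosDef)
    (V : Matrix (Fin p) (Fin q) ℝ) :
    ((1 : Matrix (Fin p) (Fin p) ℝ) - V * (H + Vᵀ * V)⁻¹ * Vᵀ).PosDef := by
  set Hs := msqrt H with hHs
  have hHsPD := sqrt_posDef hH
  letI := hHsPD.isUnit.invertible
  have hHsym : Hsᵀ = Hs := psd_symm (msqrt_psd_of hH.posSemidef)
  set W := V * Hs⁻¹ with hW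
  have hWt : Wᵀ = Hs⁻¹ * Vᵀ := by
    rw [hW, transpose_mul, Matrix.transpose_nonsing_inv, hHsym]
  have hfact : H + Vᵀ * V = Hs * (1 + Wᵀ * W) * Hs := by
    rw [Matrix.mul_add, Matrix.mul_one, Matrix.add_mul, msqrt_mul_self hH.posSemidef]
    congr 1
    rw [hWt, hW]
    simp only [Matrix.mul_assoc, Matrix.inv_mul_of_invertible, Matrix.mul_one]
    rw [← Matrix.mul_assoc, Matrix.mul_inv_of_invertible, Matrix.one_mul]
  have hinv : (H + Vᵀ * V)⁻¹ = Hs⁻¹ * (1 + Wᵀ * W)⁻¹ * Hs⁻¹ := by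
    rw [hfact, Matrix.mul_inv_rev, Matrix.mul_inv_rev, Matrix.mul_assoc]
  have hred : V * (H + Vᵀ * V)⁻¹ * Vᵀ = W * (1 + Wᵀ * W)⁻¹ * Wᵀ := by
    rw [hinv, hW, hWt]
    simp only [Matrix.mul_assoc]
  rw [hred]
  exact pd_one_sub W

/-- Key Riccati step: `Π − Π B (H + Bᵀ Π B)⁻¹ Bᵀ Π ≻ 0`. -/
lemma pd_riccati_core {Pi0 : Matrix (Fin p) (Fin p) ℝ} {H : Matrix (Fin q) (Fin q) ℝ}
    (hPi : Pi0.PosDef) (hH : H.PosDef) (B : Matrix (Fin p) (Fin q) ℝ) :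
    (Pi0 - Pi0 * B * (H + Bᵀ * Pi0 * B)⁻¹ * (Bᵀ * Pi0)).PosDef := by
  set Q := msqrt Pi0 with hQ
  have hQPD := sqrt_posDef hPi
  have hQsym : Qᵀ = Q := psd_symm (msqrt_psd_of hPi.posSemidef)
  have hQQ : Q * Q = Pi0 := msqrt_mul_self hPi.posSemidef
  set V := Q * B with hV
  have hVt : Vᵀ = Bᵀ * Q := by rw [hV, transpose_mul, hQsym]
  have h1 : Bᵀ * Pi0 * B = Vᵀ * V := by
    rw [hVt, hV, ← hQQ]
    simp only [Matrix.mul_assoc]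
  have h2 : Pi0 - Pi0 * B * (H + Bᵀ * Pi0 * B)⁻¹ * (Bᵀ * Pi0) =
      Qᵀ * ((1 : Matrix (Fin p) (Fin p) ℝ) - V * (H + Vᵀ * V)⁻¹ * Vᵀ) * Q := by
    rw [hQsym, Matrix.mul_sub, Matrix.sub_mul, Matrix.mul_one, hQQ, h1]
    congr 1
    rw [hV, hVt]
    rw [← hQQ]
    simp only [Matrix.mul_assoc]
  rw [h2]
  exact pd_conj (pd_one_sub_gen hH V) hQPD.isUnit

end helpers

section mainstep
variable {p q : ℕ}

lemma middle_pd {ε : ℝ} (hε : 0 < ε) {Pi0 : Matrix (Fin p) (Fin p) ℝ}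
    {R S : Matrix (Fin q) (Fin q) ℝ} (hPi : Pi0.PosDef) (hR : R.PosDef) (hS : S.PosSemidef)
    (B : Matrix (Fin p) (Fin q) ℝ) :
    (Pi0 - (1/ε) • (Pi0 * B * (S * (1 + S * ((1/ε) • (R + Bᵀ * Pi0 * B)) * S)⁻¹ * S) *
      (Bᵀ * Pi0))).PosDef := by
  set K := R + Bᵀ * Pi0 * B with hK
  have hKpd : K.PosDef := hR.add_posSemidef (by
    have := hPi.posSemidef.conjTranspose_mul_mul_same B
    rwa [conjTranspose_eq_transpose_of_trivial] at this)
  have hεinv : (0:ℝ) < 1/ε := by positivity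
  set C := (1/ε) • K with hC
  have hCpd : C.PosDef := pd_smul hεinv hKpd
  set Cs := msqrt C with hCs
  have hCsPD := sqrt_posDef hCpd
  letI := hCsPD.isUnit.invertible
  have hCssym : Csᵀ = Cs := psd_symm (msqrt_psd_of hCpd.posSemidef)
  have hCsCs : Cs * Cs = C := msqrt_mul_self hCpd.posSemidef
  have hSsym : Sᵀ = S := psd_symm hS
  set V := Cs * S with hV
  have hVt : Vᵀ = S * Cs := by rw [hV, transpose_mul, hCssym, hSsym]
  have hSCS : S * C * S = Vᵀ * V := by
    rw [hVt, hV, ← hCsCs]; simp only [Matrix.mul_assoc]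
  have hSL : Cs⁻¹ * V = S := by rw [hV, Matrix.inv_mul_cancel_left_of_invertible]
  have hSR : Vᵀ * Cs⁻¹ = S := by
    rw [hVt, Matrix.mul_assoc, Matrix.mul_inv_of_invertible, Matrix.mul_one]
  have hCinv : Cs⁻¹ * Cs⁻¹ = C⁻¹ := by rw [← hCsCs, Matrix.mul_inv_rev]
  set Z := Cs⁻¹ * (1 + V * Vᵀ)⁻¹ * Cs⁻¹ with hZ
  have hZpd : Z.PosDef := by
    have h1 : (Cs⁻¹)ᵀ = Cs⁻¹ := by rw [Matrix.transpose_nonsing_inv, hCssym]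
    have := pd_conj (M := (1 + V * Vᵀ)⁻¹) (A := Cs⁻¹)
      (pd_one_add_self_mul V).inv hCsPD.inv.isUnit
    rwa [h1] at this
  have hVsub : V * (1 + Vᵀ * V)⁻¹ * Vᵀ = 1 - (1 + V * Vᵀ)⁻¹ := by
    have h := one_sub_eq V
    rw [← h]; abel
  have hSGS : S * (1 + S * C * S)⁻¹ * S = C⁻¹ - Z := by
    rw [hSCS]
    calc S * (1 + Vᵀ * V)⁻¹ * S
        = (Cs⁻¹ * V) * (1 + Vᵀ * V)⁻¹ * (Vᵀ * Cs⁻¹) := by rw [hSL, hSR]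
      _ = Cs⁻¹ * (V * (1 + Vᵀ * V)⁻¹ * Vᵀ) * Cs⁻¹ := by simp only [Matrix.mul_assoc]
      _ = Cs⁻¹ * ((1 : Matrix (Fin q) (Fin q) ℝ) - (1 + V * Vᵀ)⁻¹) * Cs⁻¹ := by rw [hVsub]
      _ = C⁻¹ - Z := by
          rw [Matrix.mul_sub, Matrix.sub_mul, Matrix.mul_one, hCinv, hZ]
  have hCinvK : C⁻¹ = ε • K⁻¹ := by
    apply Matrix.inv_eq_right_inv
    rw [hC, Matrix.smul_mul, Matrix.mul_smul, smul_smul, one_div, inv_mul_cancel₀ hε.ne',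
      one_smul, Matrix.mul_nonsing_inv _ ((Matrix.isUnit_iff_isUnit_det _).mp hKpd.isUnit)]
  have hPisym : Pi0ᵀ = Pi0 := psd_symm hPi.posSemidef
  have hE : Pi0 - (1/ε) • (Pi0 * B * (S * (1 + S * C * S)⁻¹ * S) * (Bᵀ * Pi0)) =
      (Pi0 - Pi0 * B * K⁻¹ * (Bᵀ * Pi0)) + (1/ε) • ((Pi0 * B) * Z * (Pi0 * B)ᵀ) := by
    rw [hSGS, hCinvK, transpose_mul, hPisym]
    simp only [Matrix.mul_sub, Matrix.sub_mul, Matrix.mul_smul, Matrix.smul_mul, smul_sub,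
      smul_smul, one_div, inv_mul_cancel₀ hε.ne', one_smul, Matrix.mul_assoc]
    abel
  rw [hE]
  refine Matrix.PosDef.add_posSemidef ?_ ?_
  · exact pd_riccati_core hPi hR B
  · exact psd_smul hεinv.le (psd_mul_mul_transpose hZpd.posSemidef (Pi0 * B))

lemma msqrt_psd (X : Matrix (Fin q) (Fin q) ℝ) : (msqrt X).PosSemidef := by
  unfold msqrt
  split
  · rename_i h; rw [msqrt_formula_eq h, ← msqrt_eq_sqrt h]; exact msqrt_psd_of h
  · exact Matrix.PosSemidef.zero

end mainstep

theorem riccati_posDef {n m : ℕ} (hn : 1 ≤ n) (hm : 1 ≤ m) (T : ℕ) (hT : 1 ≤ T)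
    (P : LQData n m) (hε : 0 < P.ε)
    (hA : ∀ k < T, IsUnit (P.A k))
    (hR : ∀ k < T, (P.R k).PosDef) (hSw : ∀ k < T, (P.Sw k).PosDef)
    (hF : P.F.PosDef) (hSini : P.Sini.PosDef)
    (Srho : ℕ → Matrix (Fin m) (Fin m) ℝ) (hSrho : ∀ k < T, (Srho k).PosSemidef) :
    ∀ k ≤ T, (P.Ric T Srho k).PosDef := by
  have key : ∀ d k, T - k ≤ d → (P.Ric T Srho k).PosDef := by
    intro d
    induction d with
    | zero =>
      intro k hk
      rw [LQData.Ric, dif_pos (by omega : T ≤ k)]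
      exact hF
    | succ d ih =>
      intro k hk
      by_cases hTk : T ≤ k
      · rw [LQData.Ric, dif_pos hTk]
        exact hF
      · have hPk : (P.Ric T Srho (k + 1)).PosDef := ih (k + 1) (by omega)
        rw [LQData.Ric]
        simp only [dif_neg hTk]
        have hkT : k < T := by omega
        have hmid := middle_pd hε hPk (hR k hkT) (msqrt_psd (Srho k)) (P.B k)
        have hconj := pd_conj hmid (hA k hkT)
        have hEq : (P.A k)ᵀ *
            (P.Ric T Srho (k + 1) -
              (1 / P.ε) • (P.Ric T Srho (k + 1) * P.B k *
                (msqrt (Srho k) *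
                  (1 + msqrt (Srho k) *
                    ((1 / P.ε) • (P.R k + (P.B k)ᵀ * P.Ric T Srho (k + 1) * P.B k)) *
                    msqrt (Srho k))⁻¹ * msqrt (Srho k)) *
                ((P.B k)ᵀ * P.Ric T Srho (k + 1)))) * P.A k =
            (P.A k)ᵀ * P.Ric T Srho (k + 1) * P.A k -
              (1 / P.ε) • ((P.A k)ᵀ * P.Ric T Srho (k + 1) * P.B k * msqrt (Srho k) *
                (1 + msqrt (Srho k) *
                  ((1 / P.ε) • (P.R k + (P.B k)ᵀ * P.Ric T Srho (k + 1) * P.B k)) *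
                  msqrt (Srho k))⁻¹ * msqrt (Srho k) * (P.B k)ᵀ * P.Ric T Srho (k + 1) * P.A k) := by
          simp only [Matrix.mul_sub, Matrix.sub_mul, Matrix.mul_smul, Matrix.smul_mul,
            Matrix.mul_assoc]
        rw [hEq] at hconj
        exact hconj
  intro k hk
  exact key T k (by omega)
end

section
/- The function J̌ is coercive on M_T: for every M > 0 there exists R > 0 such that every tuple (Σ_{ρ_0},…,Σ_{ρ_{T−1}}) ∈ M_T with max_{0 ≤ k ≤ T−1} ‖Σ_{ρ_k}‖_F > R satisfies J̌(Σ_{ρ_0},…,Σ_{ρ_{T−1}}) > M. -/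
open Matrix Filter Topology

open Matrix Filter Topology LQData


section AuxCoercive

open Matrix

variable {d n m : ℕ}

private lemma auxJC_psd_smul {c : ℝ} {A : Matrix (Fin d) (Fin d) ℝ} (hc : 0 ≤ c)
    (hA : A.PosSemidef) : (c • A).PosSemidef := by
  exact hA.smul hc

private lemma auxJC_pd_smul {c : ℝ} {A : Matrix (Fin d) (Fin d) ℝ} (hc : 0 < c)
    (hA : A.PosDef) : (c • A).PosDef := by
  exact hA.smul hc

private lemma auxJC_trace_nonneg {A : Matrix (Fin d) (Fin d) ℝ} (hA : A.PosSemidef) :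
    0 ≤ A.trace := by
  exact hA.trace_nonneg

private lemma auxJC_msqrt_spec {X : Matrix (Fin d) (Fin d) ℝ} (hX : X.PosSemidef) :
    (msqrt X).PosSemidef ∧ msqrt X * msqrt X = X := by
  unfold msqrt
  split
  next h =>
    set U : Matrix (Fin d) (Fin d) ℝ := (h.1.eigenvectorUnitary : Matrix (Fin d) (Fin d) ℝ)
    have h1 : star U * U = 1 := (Unitary.mem_iff.mp h.1.eigenvectorUnitary.2).1
    have hsp : X = U * diagonal h.1.eigenvalues * star U := by
      simpa using h.1.spectral_theorem
    set D : Matrix (Fin d) (Fin d) ℝ := diagonal ((↑) ∘ (√·) ∘ h.1.eigenvalues) with hDdef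
    constructor
    · have hd : D.PosSemidef := by
        rw [hDdef, posSemidef_diagonal_iff]
        intro i
        simp [Real.sqrt_nonneg]
      simpa [Matrix.star_eq_conjTranspose] using hd.mul_mul_conjTranspose_same U
    · have hD : D * D = diagonal h.1.eigenvalues := by
        rw [hDdef, diagonal_mul_diagonal]
        congr 1
        funext i
        have := Real.mul_self_sqrt (h.eigenvalues_nonneg i)
        simpa using this
      have key : U * D * star U * (U * D * star U) = U * (D * D) * star U := by
        simp only [Matrix.mul_assoc]
        rw [← Matrix.mul_assoc (star U) U, h1, Matrix.one_mul]
      rw [key, hD]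
      exact hsp.symm
  next h => exact absurd hX h

private lemma auxJC_trace_mul_nonneg {A B : Matrix (Fin d) (Fin d) ℝ} (hA : A.PosSemidef)
    (hB : B.PosSemidef) : 0 ≤ (A * B).trace := by
  obtain ⟨hSpsd, hSS⟩ := auxJC_msqrt_spec hB
  set S := msqrt B
  rw [← hSS, ← Matrix.mul_assoc, Matrix.trace_mul_cycle]
  have h := hA.conjTranspose_mul_mul_same S
  rw [show Sᴴ = S from hSpsd.1] at h
  exact h.trace_nonneg

private lemma auxJC_spectral {A : Matrix (Fin d) (Fin d) ℝ} (hA : A.IsHermitian) :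
    A = (hA.eigenvectorUnitary : Matrix (Fin d) (Fin d) ℝ) * diagonal hA.eigenvalues *
      star (hA.eigenvectorUnitary : Matrix (Fin d) (Fin d) ℝ) := by
  simpa using hA.spectral_theorem

private lemma auxJC_trace_conj_unit {U D : Matrix (Fin d) (Fin d) ℝ} (hU : star U * U = 1) :
    (U * D * star U).trace = D.trace := by
  rw [Matrix.trace_mul_cycle, hU, Matrix.one_mul]

private lemma auxJC_det_conj_unit {U D : Matrix (Fin d) (Fin d) ℝ} (hU : U * star U = 1) :
    (U * D * star U).det = D.det := by
  rw [Matrix.det_mul_right_comm, hU, Matrix.one_mul]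

private lemma auxJC_trace_eq_sum_eig {A : Matrix (Fin d) (Fin d) ℝ} (hA : A.IsHermitian) :
    A.trace = ∑ i, hA.eigenvalues i := by
  conv_lhs => rw [auxJC_spectral hA]
  rw [auxJC_trace_conj_unit (Unitary.mem_iff.mp hA.eigenvectorUnitary.2).1, Matrix.trace_diagonal]

private lemma auxJC_sq_trace_eq_sum_sq {A : Matrix (Fin d) (Fin d) ℝ} (hA : A.IsHermitian) :
    (A * A).trace = ∑ i, (hA.eigenvalues i) ^ 2 := by
  set U : Matrix (Fin d) (Fin d) ℝ := (hA.eigenvectorUnitary : Matrix (Fin d) (Fin d) ℝ)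
  have h1 : star U * U = 1 := (Unitary.mem_iff.mp hA.eigenvectorUnitary.2).1
  have : A * A = U * (diagonal hA.eigenvalues * diagonal hA.eigenvalues) * star U := by
    conv_lhs => rw [auxJC_spectral hA]
    simp only [Matrix.mul_assoc]
    rw [← Matrix.mul_assoc (star U) U, h1, Matrix.one_mul]
  rw [this, auxJC_trace_conj_unit h1, Matrix.diagonal_mul_diagonal, Matrix.trace_diagonal]
  simp [sq]

private lemma auxJC_det_one_add_eig {A : Matrix (Fin d) (Fin d) ℝ} (hA : A.IsHermitian) :
    (1 + A).det = ∏ i, (1 + hA.eigenvalues i) := by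
  set U : Matrix (Fin d) (Fin d) ℝ := (hA.eigenvectorUnitary : Matrix (Fin d) (Fin d) ℝ)
  have h1 : star U * U = 1 := (Unitary.mem_iff.mp hA.eigenvectorUnitary.2).1
  have h2 : U * star U = 1 := (Unitary.mem_iff.mp hA.eigenvectorUnitary.2).2
  have : 1 + A = U * (1 + diagonal hA.eigenvalues) * star U := by
    rw [Matrix.mul_add, Matrix.add_mul, Matrix.mul_one, h2]
    conv_lhs => rw [auxJC_spectral hA]
  rw [this, auxJC_det_conj_unit h2]
  rw [← Matrix.diagonal_one, Matrix.diagonal_add, Matrix.det_diagonal]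

private lemma auxJC_one_add_sum_le_prod {ι : Type*} (s : Finset ι) (f : ι → ℝ)
    (h : ∀ i ∈ s, 0 ≤ f i) : 1 + ∑ i ∈ s, f i ≤ ∏ i ∈ s, (1 + f i) := by
  induction s using Finset.cons_induction with
  | empty => simp
  | cons a s ha ih =>
    rw [Finset.sum_cons, Finset.prod_cons]
    have h1 : 0 ≤ f a := h a (Finset.mem_cons_self a s)
    have h2 : ∀ i ∈ s, 0 ≤ f i := fun i hi => h i (Finset.mem_cons_of_mem hi)
    have h3 := ih h2
    have h4 : 0 ≤ ∑ i ∈ s, f i := Finset.sum_nonneg h2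
    nlinarith

private lemma auxJC_exists_smul_le_of_posDef {A : Matrix (Fin d) (Fin d) ℝ} (hd : 0 < d)
    (hA : A.PosDef) : ∃ c : ℝ, 0 < c ∧ (A - c • 1).PosSemidef := by
  have : Nonempty (Fin d) := ⟨⟨0, hd⟩⟩
  set lam := hA.1.eigenvalues
  refine ⟨Finset.univ.inf' Finset.univ_nonempty lam, ?_, ?_⟩
  · rw [Finset.lt_inf'_iff]
    exact fun i _ => hA.eigenvalues_pos i
  · set c := Finset.univ.inf' Finset.univ_nonempty lam with hc
    set U : Matrix (Fin d) (Fin d) ℝ := (hA.1.eigenvectorUnitary : Matrix (Fin d) (Fin d) ℝ)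
    have h1 : star U * U = 1 := (Unitary.mem_iff.mp hA.1.eigenvectorUnitary.2).1
    have h2 : U * star U = 1 := (Unitary.mem_iff.mp hA.1.eigenvectorUnitary.2).2
    have key : A - c • 1 = U * (diagonal (fun i => lam i - c)) * star U := by
      have : (diagonal (fun i => lam i - c)) = diagonal lam - c • 1 := by
        ext i j
        by_cases h : i = j <;>
          simp [Matrix.diagonal_apply, Matrix.one_apply, h]
      rw [this, Matrix.mul_sub, Matrix.sub_mul]
      congr 1
      · conv_lhs => rw [auxJC_spectral hA.1]
      · rw [Matrix.mul_smul, Matrix.mul_one, Matrix.smul_mul, h2]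
    rw [key]
    have hdiag : (diagonal (fun i => lam i - c)).PosSemidef := by
      rw [Matrix.posSemidef_diagonal_iff]
      intro i
      simp only [sub_nonneg]
      exact Finset.inf'_le _ (Finset.mem_univ i)
    simpa [Matrix.star_eq_conjTranspose] using hdiag.mul_mul_conjTranspose_same U

private lemma auxJC_det_one_add_psd {X : Matrix (Fin d) (Fin d) ℝ} (hX : X.PosSemidef) :
    1 + X.trace ≤ (1 + X).det := by
  rw [auxJC_det_one_add_eig hX.1, auxJC_trace_eq_sum_eig hX.1]
  exact auxJC_one_add_sum_le_prod _ _ (fun i _ => hX.eigenvalues_nonneg i)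

private lemma auxJC_frob_le_trace {X : Matrix (Fin d) (Fin d) ℝ} (hX : X.PosSemidef) :
    frob X ≤ X.trace := by
  have h1 : ∑ i, ∑ j, X i j ^ 2 = (X * X).trace := by
    rw [Matrix.trace]
    simp only [Matrix.diag_apply, Matrix.mul_apply]
    refine Finset.sum_congr rfl fun i _ => Finset.sum_congr rfl fun j _ => ?_
    have hsym : X j i = X i j := by
      conv_lhs => rw [← hX.1]
      rfl
    rw [sq, hsym]
  have h2 : (X * X).trace ≤ X.trace ^ 2 := by
    rw [auxJC_sq_trace_eq_sum_sq hX.1, auxJC_trace_eq_sum_eig hX.1]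
    exact Finset.sum_sq_le_sq_sum_of_nonneg (fun i _ => hX.eigenvalues_nonneg i)
  have h3 : 0 ≤ X.trace := auxJC_trace_nonneg hX
  rw [frob, h1]
  calc Real.sqrt (X * X).trace ≤ Real.sqrt (X.trace ^ 2) := Real.sqrt_le_sqrt h2
    _ = X.trace := by rw [Real.sqrt_sq h3]

private lemma auxJC_msqrt_psd (X : Matrix (Fin d) (Fin d) ℝ) : (msqrt X).PosSemidef := by
  by_cases hX : X.PosSemidef
  · exact (auxJC_msqrt_spec hX).1
  · unfold msqrt
    split
    · contradiction
    · exact Matrix.PosSemidef.zero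

private lemma auxJC_schur_key {Pi : Matrix (Fin n) (Fin n) ℝ} {Rm S : Matrix (Fin m) (Fin m) ℝ}
    (B : Matrix (Fin n) (Fin m) ℝ) {ε : ℝ} (hε : 0 < ε)
    (hPi : Pi.PosSemidef) (hR : Rm.PosDef) (hS : S.PosSemidef) :
    (Pi - (1/ε) • (Pi * B * S * (1 + S * ((1/ε) • (Rm + Bᵀ * Pi * B)) * S)⁻¹ * S * Bᵀ * Pi)).PosSemidef := by
  have hSt : Sᵀ = S := hS.1
  set W : Matrix (Fin n) (Fin m) ℝ := B * S with hW
  have hWt : Wᵀ = S * Bᵀ := by rw [hW, Matrix.transpose_mul, hSt]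
  set SCS : Matrix (Fin m) (Fin m) ℝ := S * ((1/ε) • (Rm + Bᵀ * Pi * B)) * S with hSCS
  have hSCSpsd : SCS.PosSemidef := by
    have h1 : ((1/ε) • (Rm + Bᵀ * Pi * B)).PosSemidef :=
      auxJC_psd_smul (by positivity) ((hR.posSemidef.add (hPi.conjTranspose_mul_mul_same B)))
    have := h1.mul_mul_conjTranspose_same S
    simpa [hSCS, Matrix.mul_assoc, hS.1, hSt] using this
  have hOnePD : ((1 : Matrix (Fin m) (Fin m) ℝ) + SCS).PosDef :=
    Matrix.PosDef.add_posSemidef Matrix.PosDef.one hSCSpsd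
  set Dm : Matrix (Fin m) (Fin m) ℝ := ε • (1 + SCS) with hDm
  have hDmPD : Dm.PosDef := auxJC_pd_smul hε hOnePD
  have hscs2 : ε • SCS = S * Rm * S + Wᵀ * Pi * W := by
    rw [hSCS, hWt, hW]
    rw [Matrix.mul_smul, Matrix.smul_mul, smul_smul, mul_one_div, div_self hε.ne', one_smul]
    rw [Matrix.mul_add, Matrix.add_mul]
    simp [Matrix.mul_assoc]
  have hDmEq : Dm = (ε • 1 + S * Rm * S) + Wᵀ * Pi * W := by
    rw [hDm, smul_add, hscs2, add_assoc]
  set Z : Matrix (Fin n) (Fin n ⊕ Fin m) ℝ := fromCols 1 W with hZ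
  set Y : Matrix (Fin m) (Fin n ⊕ Fin m) ℝ := fromCols 0 1 with hY
  have e1 : Zᴴ * Pi * Z = fromBlocks Pi (Pi * W) (Wᵀ * Pi) (Wᵀ * Pi * W) := by
    rw [Matrix.mul_assoc, hZ, Matrix.mul_fromCols,
      Matrix.conjTranspose_fromCols_eq_fromRows_conjTranspose,
      Matrix.fromRows_mul_fromCols]
    simp [Matrix.mul_assoc]
  set X2 : Matrix (Fin m) (Fin m) ℝ := ε • 1 + S * Rm * S with hX2
  have e2 : Yᴴ * X2 * Y = fromBlocks 0 0 0 X2 := by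
    rw [Matrix.mul_assoc, hY, Matrix.mul_fromCols,
      Matrix.conjTranspose_fromCols_eq_fromRows_conjTranspose,
      Matrix.fromRows_mul_fromCols]
    simp
  have hX2psd : X2.PosSemidef := by
    refine Matrix.PosSemidef.add (auxJC_psd_smul hε.le Matrix.PosSemidef.one) ?_
    have := hR.posSemidef.mul_mul_conjTranspose_same S
    simpa [hSt] using this
  have hblock : (fromBlocks Pi (Pi * W) (Wᵀ * Pi) Dm).PosSemidef := by
    have hsum : fromBlocks Pi (Pi * W) (Wᵀ * Pi) Dm
        = fromBlocks Pi (Pi * W) (Wᵀ * Pi) (Wᵀ * Pi * W) + fromBlocks 0 0 0 X2 := by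
      rw [Matrix.fromBlocks_add]
      rw [hDmEq, hX2]
      simp [add_assoc]
      abel
    rw [hsum, ← e1, ← e2]
    exact (hPi.conjTranspose_mul_mul_same Z).add (hX2psd.conjTranspose_mul_mul_same Y)
  letI : Invertible Dm := hDmPD.isUnit.invertible
  have hPiW : (Pi * W)ᴴ = Wᵀ * Pi := by
    rw [Matrix.conjTranspose_mul, Matrix.conjTranspose_eq_transpose_of_trivial,
      Matrix.conjTranspose_eq_transpose_of_trivial, (show Piᵀ = Pi from hPi.1)]
  have hschur : (Pi - (Pi * W) * Dm⁻¹ * (Pi * W)ᴴ).PosSemidef := by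
    rw [← Matrix.PosDef.fromBlocks₂₂ Pi (Pi * W) hDmPD]
    rw [hPiW]
    exact hblock
  have hDminv : Dm⁻¹ = ε⁻¹ • (1 + SCS)⁻¹ := by
    apply Matrix.inv_eq_left_inv
    rw [hDm, Matrix.smul_mul, Matrix.mul_smul, smul_smul, inv_mul_cancel₀ hε.ne', one_smul,
      Matrix.nonsing_inv_mul _ ((Matrix.isUnit_iff_isUnit_det _).mp hOnePD.isUnit)]
  have goal_eq : Pi - (1/ε) • (Pi * B * S * (1 + SCS)⁻¹ * S * Bᵀ * Pi)
      = Pi - Pi * W * Dm⁻¹ * (Pi * W)ᴴ := by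
    rw [hPiW, hDminv, hW, hWt]
    simp only [Matrix.mul_smul, Matrix.smul_mul, Matrix.mul_assoc, one_div]
  rw [goal_eq]
  exact hschur

private lemma auxJC_ric_psd (P : LQData n m) (T : ℕ) (Srho : ℕ → Matrix (Fin m) (Fin m) ℝ)
    (hε : 0 < P.ε) (hR : ∀ k < T, (P.R k).PosDef) (hF : P.F.PosDef) :
    ∀ k, (P.Ric T Srho k).PosSemidef := by
  have main : ∀ j k, T - k ≤ j → (P.Ric T Srho k).PosSemidef := by
    intro j
    induction j with
    | zero =>
      intro k hk
      rw [LQData.Ric, dif_pos (by omega : T ≤ k)]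
      exact hF.posSemidef
    | succ j ih =>
      intro k hk
      by_cases h : T ≤ k
      · rw [LQData.Ric, dif_pos h]
        exact hF.posSemidef
      · have hPk : (P.Ric T Srho (k+1)).PosSemidef := ih (k+1) (by omega)
        have hkey := auxJC_schur_key (P.B k) hε hPk (hR k (by omega)) (auxJC_msqrt_psd (Srho k))
        rw [LQData.Ric, dif_neg h]
        have heq : (P.A k)ᵀ * P.Ric T Srho (k+1) * P.A k -
            (1 / P.ε) • ((P.A k)ᵀ * P.Ric T Srho (k+1) * P.B k * msqrt (Srho k) *
              (1 + msqrt (Srho k) * ((1 / P.ε) • (P.R k + (P.B k)ᵀ * P.Ric T Srho (k+1) * P.B k)) *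
                msqrt (Srho k))⁻¹ * msqrt (Srho k) * (P.B k)ᵀ * P.Ric T Srho (k+1) * P.A k)
            = (P.A k)ᴴ * (P.Ric T Srho (k+1) -
              (1 / P.ε) • (P.Ric T Srho (k+1) * P.B k * msqrt (Srho k) *
                (1 + msqrt (Srho k) * ((1 / P.ε) • (P.R k + (P.B k)ᵀ * P.Ric T Srho (k+1) * P.B k)) *
                  msqrt (Srho k))⁻¹ * msqrt (Srho k) * (P.B k)ᵀ * P.Ric T Srho (k+1))) * P.A k := by
          rw [Matrix.conjTranspose_eq_transpose_of_trivial]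
          simp only [Matrix.mul_sub, Matrix.sub_mul, Matrix.mul_smul, Matrix.smul_mul,
            Matrix.mul_assoc]
        exact heq ▸ (hkey.conjTranspose_mul_mul_same (P.A k))
  exact fun k => main (T - k) k le_rfl

end AuxCoercive

theorem jcheck_coercive {n m : ℕ} (hn : 1 ≤ n) (hm : 1 ≤ m) (T : ℕ) (hT : 1 ≤ T)
    (P : LQData n m) (hε : 0 < P.ε)
    (hR : ∀ k < T, (P.R k).PosDef) (hSw : ∀ k < T, (P.Sw k).PosDef)
    (hF : P.F.PosDef) (hSini : P.Sini.PosDef) :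
    ∀ M : ℝ, 0 < M → ∃ Rad : ℝ, 0 < Rad ∧
      ∀ σ : Fin T → Matrix (Fin m) (Fin m) ℝ, (∀ k, (σ k).PosSemidef) →
        (∃ k, Rad < frob (σ k)) → M < P.Jcheck T σ := by
  intro M hM
  have hcex : ∀ k, k < T → ∃ c : ℝ, 0 < c ∧ (P.R k - c • 1).PosSemidef := fun k hk =>
    auxJC_exists_smul_le_of_posDef (by omega) (hR k hk)
  choose! cfun hcpos hcpsd using hcex
  have hne : (Finset.range T).Nonempty := ⟨0, Finset.mem_range.mpr (by omega)⟩
  set c : ℝ := (Finset.range T).inf' hne cfun with hcdef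
  have hc0 : 0 < c := by
    rw [hcdef, Finset.lt_inf'_iff]
    exact fun k hk => hcpos k (Finset.mem_range.mp hk)
  have hcle : ∀ k, k < T → (P.R k - c • 1).PosSemidef := by
    intro k hk
    have h2 : P.R k - c • 1 = (P.R k - cfun k • 1) + ((cfun k - c) • 1) := by
      rw [sub_smul]; abel
    rw [h2]
    exact (hcpsd k hk).add (auxJC_psd_smul
      (sub_nonneg.mpr (Finset.inf'_le _ (Finset.mem_range.mpr hk))) Matrix.PosSemidef.one)
  refine ⟨(P.ε / c) * Real.exp (2 * M / P.ε), by positivity, ?_⟩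
  rintro σ hσ ⟨k0, hk0⟩
  have hPi : ∀ k, (P.Ric T (extT T σ) k).PosSemidef := auxJC_ric_psd P T (extT T σ) hε hR hF
  have hmain : ∀ k : Fin T, P.ε * Real.log (1 + (c / P.ε) * (σ k).trace) ≤
      P.ε * Real.log ((extT T σ ↑k + P.SigQ T (extT T σ) ↑k).det /
        (P.SigQ T (extT T σ) ↑k).det) +
      (P.Ric T (extT T σ) (↑k + 1) * P.Sw ↑k).trace := by
    intro k
    have hkT : (k : ℕ) < T := k.2
    have hs : extT T σ ↑k = σ k := by simp [extT]
    have hPi1psd : (P.Ric T (extT T σ) (↑k + 1)).PosSemidef := hPi _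
    set G : Matrix (Fin m) (Fin m) ℝ :=
      P.R ↑k + (P.B ↑k)ᵀ * P.Ric T (extT T σ) (↑k + 1) * P.B ↑k with hG
    have hGpd : G.PosDef :=
      (hR ↑k hkT).add_posSemidef (hPi1psd.conjTranspose_mul_mul_same (P.B ↑k))
    have hQ : P.SigQ T (extT T σ) ↑k = P.ε • G⁻¹ := rfl
    have hQpd : (P.ε • G⁻¹).PosDef := auxJC_pd_smul hε hGpd.inv
    have hQinv : (P.ε • G⁻¹)⁻¹ = P.ε⁻¹ • G := by
      apply Matrix.inv_eq_left_inv
      rw [Matrix.smul_mul, Matrix.mul_smul, smul_smul, inv_mul_cancel₀ hε.ne', one_smul,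
        Matrix.mul_nonsing_inv _ ((Matrix.isUnit_iff_isUnit_det _).mp hGpd.isUnit)]
    have hQipd : ((P.ε • G⁻¹)⁻¹).PosDef := by
      rw [hQinv]; exact auxJC_pd_smul (inv_pos.mpr hε) hGpd
    set Sq : Matrix (Fin m) (Fin m) ℝ := msqrt ((P.ε • G⁻¹)⁻¹) with hSqdef
    have hSq : Sq * Sq = (P.ε • G⁻¹)⁻¹ := (auxJC_msqrt_spec hQipd.posSemidef).2
    have hSqpsd : Sq.PosSemidef := (auxJC_msqrt_spec hQipd.posSemidef).1
    have hSqdetne : Sq.det ≠ 0 := by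
      intro h0
      have : ((P.ε • G⁻¹)⁻¹).det = 0 := by rw [← hSq, Matrix.det_mul, h0, mul_zero]
      exact hQipd.det_pos.ne' this
    have h1 : Sq * Sq⁻¹ = 1 := Matrix.mul_nonsing_inv _ (Ne.isUnit hSqdetne)
    have h1i : Sq⁻¹ * Sq = 1 := Matrix.nonsing_inv_mul _ (Ne.isUnit hSqdetne)
    set X : Matrix (Fin m) (Fin m) ℝ := Sq * extT T σ ↑k * Sq with hX
    have hXpsd : X.PosSemidef := by
      rw [hX, hs]
      have := (hσ k).mul_mul_conjTranspose_same Sq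
      simpa [(show Sqᴴ = Sq from hSqpsd.1), (show Sqᵀ = Sq from hSqpsd.1)] using this
    have hQdetU : IsUnit (P.ε • G⁻¹).det := (Matrix.isUnit_iff_isUnit_det _).mp hQpd.isUnit
    have hQeq : P.ε • G⁻¹ = Sq⁻¹ * Sq⁻¹ := by
      have hrev := Matrix.mul_inv_rev Sq Sq
      rw [hSq, Matrix.nonsing_inv_nonsing_inv _ hQdetU] at hrev
      exact hrev
    have e3 : X * Sq⁻¹ = Sq * extT T σ ↑k := by
      rw [hX, Matrix.mul_assoc, h1, Matrix.mul_one]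
    have e4 : Sq⁻¹ * (Sq * extT T σ ↑k) = extT T σ ↑k := by
      rw [← Matrix.mul_assoc, h1i, Matrix.one_mul]
    have hfac : extT T σ ↑k + P.ε • G⁻¹ = Sq⁻¹ * ((1 + X) * Sq⁻¹) := by
      conv_rhs => rw [Matrix.add_mul, Matrix.one_mul, Matrix.mul_add, e3, e4]
      rw [← hQeq, add_comm]
    have hSqidetne : (Sq⁻¹).det ≠ 0 := by
      intro h0
      have : (Sq⁻¹ * Sq).det = 0 := by rw [Matrix.det_mul, h0, zero_mul]
      rw [h1i, Matrix.det_one] at this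
      exact one_ne_zero this
    have hdetQpos : 0 < (P.ε • G⁻¹).det := hQpd.det_pos
    have hratio : (extT T σ ↑k + P.ε • G⁻¹).det / (P.ε • G⁻¹).det = (1 + X).det := by
      rw [hfac, hQeq, Matrix.det_mul, Matrix.det_mul, Matrix.det_mul,
        div_eq_iff (mul_ne_zero hSqidetne hSqidetne)]
      ring
    -- trace bound
    have hcyc : X.trace = ((P.ε • G⁻¹)⁻¹ * extT T σ ↑k).trace := by
      rw [hX, Matrix.trace_mul_cycle, ← hSq]
    have hpsd2 : (((P.ε • G⁻¹)⁻¹ - (c / P.ε) • 1)).PosSemidef := by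
      rw [hQinv]
      have heq2 : P.ε⁻¹ • G - (c / P.ε) • (1 : Matrix (Fin m) (Fin m) ℝ)
          = P.ε⁻¹ • ((P.R ↑k - c • 1) + (P.B ↑k)ᵀ * P.Ric T (extT T σ) (↑k + 1) * P.B ↑k) := by
        rw [hG, smul_add, smul_add, smul_sub, smul_smul]
        rw [show P.ε⁻¹ * c = c / P.ε by rw [div_eq_mul_inv, mul_comm]]
        abel
      rw [heq2]
      exact auxJC_psd_smul (inv_pos.mpr hε).le
        ((hcle ↑k hkT).add (hPi1psd.conjTranspose_mul_mul_same _))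
    have h0tr : 0 ≤ ((((P.ε • G⁻¹)⁻¹ - (c / P.ε) • 1)) * extT T σ ↑k).trace := by
      apply auxJC_trace_mul_nonneg hpsd2
      rw [hs]; exact hσ k
    rw [Matrix.sub_mul, Matrix.trace_sub, Matrix.smul_mul, Matrix.trace_smul,
      Matrix.one_mul] at h0tr
    have htrb : (c / P.ε) * (σ k).trace ≤ X.trace := by
      rw [hcyc, hs]
      rw [hs] at h0tr
      simp only [smul_eq_mul] at h0tr
      linarith
    -- put together
    have htrσ : 0 ≤ (σ k).trace := auxJC_trace_nonneg (hσ k)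
    have hXtr0 : 0 ≤ X.trace := auxJC_trace_nonneg hXpsd
    have hdet1 : 1 + X.trace ≤ (1 + X).det := auxJC_det_one_add_psd hXpsd
    have harg0 : (0:ℝ) < 1 + (c / P.ε) * (σ k).trace := by positivity
    have hloglog : Real.log (1 + (c / P.ε) * (σ k).trace) ≤ Real.log ((1 + X).det) := by
      apply Real.log_le_log harg0
      linarith
    have htrw : 0 ≤ (P.Ric T (extT T σ) (↑k + 1) * P.Sw ↑k).trace :=
      auxJC_trace_mul_nonneg (hPi _) (hSw ↑k hkT).posSemidef
    rw [hQ, hratio]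
    have := mul_le_mul_of_nonneg_left hloglog hε.le
    linarith
  have hlow : ∀ k : Fin T, 0 ≤
      P.ε * Real.log ((extT T σ ↑k + P.SigQ T (extT T σ) ↑k).det /
        (P.SigQ T (extT T σ) ↑k).det) +
      (P.Ric T (extT T σ) (↑k + 1) * P.Sw ↑k).trace := by
    intro k
    refine le_trans ?_ (hmain k)
    have htrσ : 0 ≤ (σ k).trace := auxJC_trace_nonneg (hσ k)
    have : (0:ℝ) ≤ Real.log (1 + (c / P.ε) * (σ k).trace) := by
      apply Real.log_nonneg
      nlinarith [div_pos hc0 hε]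
    positivity
  have hbig : 2 * M <
      P.ε * Real.log ((extT T σ ↑k0 + P.SigQ T (extT T σ) ↑k0).det /
        (P.SigQ T (extT T σ) ↑k0).det) +
      (P.Ric T (extT T σ) (↑k0 + 1) * P.Sw ↑k0).trace := by
    refine lt_of_lt_of_le ?_ (hmain k0)
    have htr : P.ε / c * Real.exp (2 * M / P.ε) < (σ k0).trace :=
      lt_of_lt_of_le hk0 (auxJC_frob_le_trace (hσ k0))
    have hkey : Real.exp (2 * M / P.ε) < 1 + (c / P.ε) * (σ k0).trace := by
      have h5 : (c / P.ε) * (P.ε / c) = 1 := by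
        rw [div_mul_div_comm, mul_comm, div_self (by positivity)]
      nlinarith [div_pos hc0 hε, Real.exp_pos (2 * M / P.ε)]
    have hlog : 2 * M / P.ε < Real.log (1 + (c / P.ε) * (σ k0).trace) := by
      have htrk0 : 0 ≤ (σ k0).trace := auxJC_trace_nonneg (hσ k0)
      rw [Real.lt_log_iff_exp_lt (by nlinarith [div_pos hc0 hε])]
      exact hkey
    have := mul_lt_mul_of_pos_left hlog hε
    rw [show P.ε * (2 * M / P.ε) = 2 * M by field_simp] at this
    linarith
  have hsum : (P.ε * Real.log ((extT T σ ↑k0 + P.SigQ T (extT T σ) ↑k0).det /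
        (P.SigQ T (extT T σ) ↑k0).det) +
      (P.Ric T (extT T σ) (↑k0 + 1) * P.Sw ↑k0).trace) ≤
      ∑ k : Fin T,
        (P.ε * Real.log ((extT T σ ↑k + P.SigQ T (extT T σ) ↑k).det /
          (P.SigQ T (extT T σ) ↑k).det) +
        (P.Ric T (extT T σ) (↑k + 1) * P.Sw ↑k).trace) :=
    Finset.single_le_sum (fun k _ => hlow k) (Finset.mem_univ k0)
  have ht0 : 0 ≤ (P.Ric T (extT T σ) 0 * P.Sini).trace :=
    auxJC_trace_mul_nonneg (hPi 0) hSini.posSemidef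
  rw [LQData.Jcheck]
  linarith
end
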